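/- Let T : dom T ⊆ H → H be a linear operator in the complex Hilbert space H, let ω ∈ [0, π/2], and assume ⟨Tf, f⟩ ∈ Σ_ω for all f ∈ dom T with ‖f‖ = 1, and that for every μ ∈ ℂ \ Σ_ω the operator T − μ maps dom T onto H (these hold if T is m-sectorial with vertex 0, or m-accretive when ω = π/2). Then for every λ ∈ ℂ \ Σ_ω and every f ∈ dom T, one has m·‖Tf‖ ≤ ‖Tf − λf‖, where m := sin(|arg λ| − ω) if |arg λ| ∈ (ω, ω + π/2) and m := 1 if |arg λ| ∈ [ω + π/2, π]; equivalently, ‖T(T − λ)^{-1}‖ ≤ 1/m. -/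

import Mathlib

open Real

noncomputable section

variable {H : Type*} [NormedAddCommGroup H] [InnerProductSpace ℂ H] [CompleteSpace H]

local notation "⟪" x ", " y "⟫" => @inner ℂ _ _ x y

/-- The closed sector `Σ_ω = {z ∈ ℂ : |arg z| ≤ ω}`. -/
def SigmaSector (ω : ℝ) : Set ℂ := {z : ℂ | |z.arg| ≤ ω}

lemma re_helper' (r s t θ ψ : ℝ) :
    (Complex.exp (t*Complex.I) * ((r:ℂ) * Complex.exp (θ*Complex.I))
        * ((s:ℂ) * Complex.exp (ψ*Complex.I))).re = r * s * Real.cos (t + θ + ψ) := by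
  have : Complex.exp (t*Complex.I) * ((r:ℂ) * Complex.exp (θ*Complex.I))
        * ((s:ℂ) * Complex.exp (ψ*Complex.I))
      = ((r*s : ℝ) : ℂ) * Complex.exp (((t+θ+ψ : ℝ)) * Complex.I) := by
    push_cast
    rw [add_mul, add_mul, Complex.exp_add, Complex.exp_add]
    ring
  rw [this, Complex.re_ofReal_mul, Complex.exp_ofReal_mul_I_re, mul_assoc]

lemma re_helper (t : ℝ) (l z : ℂ) :
    (Complex.exp (t*Complex.I) * l * (starRingEnd ℂ) z).re
      = ‖l‖ * ‖z‖ * Real.cos (t + l.arg - z.arg) := by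
  have hz : (starRingEnd ℂ) z = ((‖z‖ : ℝ) : ℂ) * Complex.exp ((-z.arg : ℝ) * Complex.I) := by
    conv_lhs => rw [← Complex.norm_mul_exp_arg_mul_I z]
    rw [map_mul, Complex.conj_ofReal, ← Complex.exp_conj]
    norm_num
  have hl : l = ((‖l‖ : ℝ) : ℂ) * Complex.exp ((l.arg : ℝ) * Complex.I) :=
    (Complex.norm_mul_exp_arg_mul_I l).symm
  rw [hz]
  conv_lhs => rw [hl]
  rw [re_helper']
  ring_nf

lemma keyC (ω : ℝ) (hω1 : ω ≤ π/2) (l : ℂ) :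
    ∃ μ : ℂ, (if |l.arg| < ω + π/2 then Real.sin (|l.arg| - ω) else 1) ≤ μ.re ∧
      ‖μ‖ = 1 ∧
      ∀ z : ℂ, |z.arg| ≤ ω → (μ * l * (starRingEnd ℂ) z).re ≤ 0 := by
  set θ := |l.arg| with hθdef
  have hθπ : θ ≤ π := Complex.abs_arg_le_pi l
  set φ0 : ℝ := if θ < ω + π/2 then ω + π/2 - θ else 0 with hφ0
  have main : ∀ ψ : ℝ, |ψ| ≤ ω → Real.cos (φ0 + θ - ψ) ≤ 0 := by
    intro ψ hψ
    obtain ⟨h1, h2⟩ := abs_le.mp hψ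
    apply Real.cos_nonpos_of_pi_div_two_le_of_le
    · by_cases h : θ < ω + π/2 <;> simp only [hφ0, if_pos, if_neg, h, if_true, if_false] <;>
        linarith
    · by_cases h : θ < ω + π/2 <;> simp only [hφ0, if_pos, if_neg, h, if_true, if_false] <;>
        linarith
  have hcosφ : (if θ < ω + π/2 then Real.sin (θ - ω) else 1) ≤ Real.cos φ0 := by
    by_cases h : θ < ω + π/2 <;> simp only [hφ0, h, if_true, if_false]
    · have : ω + π/2 - θ = π/2 - (θ - ω) := by ring
      rw [this, Real.cos_pi_div_two_sub]
    · simp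
  by_cases hpos : 0 ≤ l.arg
  · have hla : l.arg = θ := (abs_of_nonneg hpos).symm
    refine ⟨Complex.exp ((φ0 : ℝ) * Complex.I), ?_, Complex.norm_exp_ofReal_mul_I φ0, ?_⟩
    · rw [Complex.exp_ofReal_mul_I_re]; exact hcosφ
    · intro z hz
      rw [re_helper, hla]
      have := main z.arg hz
      have h0 : (0:ℝ) ≤ ‖l‖ * ‖z‖ :=
        mul_nonneg (norm_nonneg l) (norm_nonneg z)
      calc ‖l‖ * ‖z‖ * Real.cos (φ0 + θ - z.arg)
          ≤ ‖l‖ * ‖z‖ * 0 := by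
            exact mul_le_mul_of_nonneg_left this h0
        _ = 0 := by ring
  · push_neg at hpos
    have hla : l.arg = -θ := by rw [hθdef, abs_of_neg hpos]; ring
    refine ⟨Complex.exp (((-φ0 : ℝ)) * Complex.I), ?_, Complex.norm_exp_ofReal_mul_I (-φ0), ?_⟩
    · rw [Complex.exp_ofReal_mul_I_re, Real.cos_neg]; exact hcosφ
    · intro z hz
      rw [re_helper, hla]
      have hcos : Real.cos (-φ0 + -θ - z.arg) = Real.cos (φ0 + θ - (-z.arg)) := by
        rw [show -φ0 + -θ - z.arg = -(φ0 + θ - (-z.arg)) by ring, Real.cos_neg]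
      rw [hcos]
      have := main (-z.arg) (by rwa [abs_neg])
      have h0 : (0:ℝ) ≤ ‖l‖ * ‖z‖ :=
        mul_nonneg (norm_nonneg l) (norm_nonneg z)
      calc ‖l‖ * ‖z‖ * Real.cos (φ0 + θ - (-z.arg))
          ≤ ‖l‖ * ‖z‖ * 0 := mul_le_mul_of_nonneg_left this h0
        _ = 0 := by ring

/-- Resolvent-type estimate for sectorial/accretive operators: if `W(T) ⊆ Σ_ω` and
`T − μ` is onto for every `μ ∉ Σ_ω` (as for m-sectorial operators with vertex `0`,
resp. m-accretive operators when `ω = π/2`), then for `λ ∉ Σ_ω` and `f ∈ dom T`,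
`m · ‖Tf‖ ≤ ‖Tf − λf‖`, where `m = sin(|arg λ| − ω)` if `|arg λ| ∈ (ω, ω + π/2)` and
`m = 1` if `|arg λ| ∈ [ω + π/2, π]`; equivalently `‖T(T − λ)⁻¹‖ ≤ 1/m`. -/
theorem sectorial_resolvent_estimate
    (T : H →ₗ.[ℂ] H) (ω : ℝ) (hω0 : 0 ≤ ω) (hω1 : ω ≤ π / 2)
    (hW : ∀ f : T.domain, ‖(f : H)‖ = 1 → ⟪(f : H), T f⟫ ∈ SigmaSector ω)
    (hsurj : ∀ μ : ℂ, μ ∉ SigmaSector ω → ∀ h : H, ∃ f : T.domain,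
      T f - μ • (f : H) = h)
    (l : ℂ) (hl : l ∉ SigmaSector ω) :
    ∀ f : T.domain,
      (if |l.arg| < ω + π / 2 then Real.sin (|l.arg| - ω) else 1) * ‖T f‖ ≤
        ‖T f - l • (f : H)‖ := by
  intro f
  set m : ℝ := if |l.arg| < ω + π / 2 then Real.sin (|l.arg| - ω) else 1 with hm
  by_cases hTf : T f = 0
  · rw [hTf]
    simp only [norm_zero, mul_zero, zero_sub, norm_neg]
    positivity
  have hf : (f : H) ≠ 0 := by
    intro h
    apply hTf
    have : f = 0 := Subtype.ext h
    rw [this]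
    exact T.map_zero
  have hfpos : 0 < ‖(f : H)‖ := norm_pos_iff.mpr hf
  set z₀ : ℂ := ⟪(f : H), T f⟫ with hz₀def
  -- z₀ is in the sector
  have hz₀ : |z₀.arg| ≤ ω := by
    set c : ℂ := ((‖(f:H)‖⁻¹ : ℝ) : ℂ) with hc
    have hu_norm : ‖((c • f : T.domain) : H)‖ = 1 := by
      rw [Submodule.coe_smul, norm_smul, hc]
      simp [abs_of_pos (inv_pos.mpr hfpos), inv_mul_cancel₀ (ne_of_gt hfpos)]
    have hmem := hW (c • f) hu_norm
    simp only [SigmaSector, Set.mem_setOf_eq] at hmem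
    have h1 : ⟪((c • f : T.domain) : H), T (c • f)⟫
        = ((‖(f:H)‖⁻¹ * ‖(f:H)‖⁻¹ : ℝ) : ℂ) * z₀ := by
      rw [T.map_smul, Submodule.coe_smul, inner_smul_left, inner_smul_right, hc,
        Complex.conj_ofReal, hz₀def]
      push_cast
      ring
    rw [h1, Complex.arg_real_mul] at hmem
    · exact hmem
    · positivity
  obtain ⟨μ, hμre, hμabs, hμz⟩ := keyC ω hω1 l
  set g : H := T f with hg
  have hgpos : 0 < ‖g‖ := norm_pos_iff.mpr hTf
  have hX : (⟪g, g - l • (f : H)⟫ : ℂ)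
      = ((‖g‖^2 : ℝ) : ℂ) - l * (starRingEnd ℂ) z₀ := by
    simp [inner_sub_right, inner_smul_right, inner_self_eq_norm_sq_to_K, hz₀def,
      inner_conj_symm]
  have h1 : m * (‖g‖ * ‖g‖) ≤ (μ * ⟪g, g - l • (f : H)⟫).re := by
    rw [hX, mul_sub, Complex.sub_re, mul_comm μ ((‖g‖^2 : ℝ) : ℂ), Complex.re_ofReal_mul]
    have h2 := hμz z₀ hz₀
    have h3 : (μ * (l * (starRingEnd ℂ) z₀)).re ≤ 0 := by
      rwa [← mul_assoc]
    nlinarith [sq_nonneg ‖g‖, hμre]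
  have h2 : (μ * ⟪g, g - l • (f : H)⟫).re ≤ ‖g‖ * ‖g - l • (f : H)‖ := by
    calc (μ * ⟪g, g - l • (f : H)⟫).re
        ≤ ‖μ * ⟪g, g - l • (f : H)⟫‖ := Complex.re_le_norm _
      _ = ‖μ‖ * ‖(⟪g, g - l • (f : H)⟫ : ℂ)‖ := norm_mul _ _
      _ = ‖(⟪g, g - l • (f : H)⟫ : ℂ)‖ := by rw [hμabs, one_mul]
      _ ≤ ‖g‖ * ‖g - l • (f : H)‖ := norm_inner_le_norm _ _
  nlinarith [h1.trans h2]


end
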